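/- For every homomorphic image P' of the path on k vertices, there exists a homomorphic image C' of the cycle on k+1 vertices such that P' is a subgraph of C'. -/

import Mathlib

/-- `Hhat` is a homomorphic image of `H`: there is a surjection `h` on the vertices mapping
the two endpoints of every edge to distinct vertices, such that the edges of `Hhat` are
exactly the images of the edges of `H`. -/
def IsHomImage {V W : Type} (H : SimpleGraph V) (Hhat : SimpleGraph W) : Prop :=
  ∃ h : V → W, Function.Surjective h ∧
    (∀ u v : V, H.Adj u v → h u ≠ h v) ∧
    (∀ x y : W, Hhat.Adj x y ↔ ∃ u v : V, H.Adj u v ∧ h u = x ∧ h v = y)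

lemma cycle_adj_cases {k : ℕ} {u v : Fin (k + 1)}
    (h : (SimpleGraph.cycleGraph (k + 1)).Adj u v) :
    (u.val + 1 = v.val ∧ v.val ≤ k) ∨ (v.val + 1 = u.val ∧ u.val ≤ k) ∨
    (u.val = 0 ∧ v.val = k ∧ 1 ≤ k) ∨ (v.val = 0 ∧ u.val = k ∧ 1 ≤ k) := by
  rw [SimpleGraph.cycleGraph_adj'] at h
  have hu : u.val < k + 1 := u.isLt
  have hv : v.val < k + 1 := v.isLt
  rcases h with h | h
  · simp only [Fin.sub_def, Fin.val_mk] at h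
    rcases Nat.lt_or_ge (k + 1 - v.val + u.val) (k + 1) with h1 | h1
    · rw [Nat.mod_eq_of_lt h1] at h; omega
    · rw [Nat.mod_eq_sub_mod h1, Nat.mod_eq_of_lt (by omega)] at h; omega
  · simp only [Fin.sub_def, Fin.val_mk] at h
    rcases Nat.lt_or_ge (k + 1 - u.val + v.val) (k + 1) with h1 | h1
    · rw [Nat.mod_eq_of_lt h1] at h; omega
    · rw [Nat.mod_eq_sub_mod h1, Nat.mod_eq_of_lt (by omega)] at h; omega

/-- For every homomorphic image `P'` of the path on `k` vertices, there exists a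
homomorphic image `C'` of the cycle on `k + 1` vertices such that `P'` is a subgraph of
`C'` (witnessed by an injection on the vertices preserving adjacency). -/
theorem hom_image_path_subgraph_hom_image_cycle (k : ℕ) (W : Type) (P' : SimpleGraph W)
    (hP : IsHomImage (SimpleGraph.pathGraph k) P') :
    ∃ (W' : Type) (C' : SimpleGraph W') (f : W → W'),
      IsHomImage (SimpleGraph.cycleGraph (k + 1)) C' ∧
      Function.Injective f ∧
      ∀ u v : W, P'.Adj u v → C'.Adj (f u) (f v) := by
  obtain ⟨h, hsurj, hsep, hedge⟩ := hP
  classical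
  set g : Fin (k + 1) → W ⊕ Unit :=
    fun i => if hi : i.val < k then Sum.inl (h ⟨i.val, hi⟩) else Sum.inr () with hg
  have hgl : ∀ (i : Fin (k + 1)) (hi : i.val < k), g i = Sum.inl (h ⟨i.val, hi⟩) := by
    intro i hi; simp [hg, hi]
  have hgr : ∀ (i : Fin (k + 1)), i.val = k → g i = Sum.inr () := by
    intro i hi; simp [hg, hi]
  have hdist : ∀ u v : Fin (k + 1), (SimpleGraph.cycleGraph (k + 1)).Adj u v → g u ≠ g v := by
    intro u v hadj
    have hpadj : ∀ (a : Fin (k+1)) (ha : a.val < k) (b : Fin (k+1)) (hb : b.val < k),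
        a.val + 1 = b.val → g a ≠ g b := by
      intro a ha b hb hab
      rw [hgl a ha, hgl b hb]
      intro he
      exact hsep ⟨a.val, ha⟩ ⟨b.val, hb⟩
        (SimpleGraph.pathGraph_adj.mpr (Or.inl hab)) (Sum.inl_injective he)
    rcases cycle_adj_cases hadj with ⟨h1, h2⟩ | ⟨h1, h2⟩ | ⟨h1, h2, h3⟩ | ⟨h1, h2, h3⟩
    · by_cases hvk : v.val < k
      · exact hpadj u (by omega) v hvk h1
      · rw [hgl u (by omega), hgr v (by omega)]; simp
    · by_cases huk : u.val < k
      · exact (hpadj v (by omega) u huk h1).symm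
      · rw [hgr u (by omega), hgl v (by omega)]; simp
    · rw [hgl u (by omega), hgr v (by omega)]; simp
    · rw [hgr u (by omega), hgl v (by omega)]; simp
  refine ⟨W ⊕ Unit,
    { Adj := fun x y => ∃ u v : Fin (k + 1),
        (SimpleGraph.cycleGraph (k + 1)).Adj u v ∧ g u = x ∧ g v = y
      symm := ⟨by rintro x y ⟨u, v, ha, rfl, rfl⟩; exact ⟨v, u, ha.symm, rfl, rfl⟩⟩
      loopless := ⟨by rintro x ⟨u, v, ha, rfl, he⟩; exact hdist u v ha he.symm⟩ },
    Sum.inl, ⟨g, ?_, hdist, fun x y => Iff.rfl⟩, Sum.inl_injective, ?_⟩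
  · rintro (w | u)
    · obtain ⟨i, rfl⟩ := hsurj w
      exact ⟨⟨i.val, i.isLt.trans (Nat.lt_succ_self k)⟩, by rw [hgl _ i.isLt]⟩
    · exact ⟨⟨k, Nat.lt_succ_self k⟩, by rw [hgr _ rfl]⟩
  · intro u v huv
    obtain ⟨a, b, hab, ha, hb⟩ := (hedge u v).mp huv
    refine ⟨a.castSucc, b.castSucc, ?_, ?_, ?_⟩
    · apply SimpleGraph.pathGraph_le_cycleGraph
      rw [SimpleGraph.pathGraph_adj]
      have := SimpleGraph.pathGraph_adj.mp hab
      simpa using this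
    · rw [hgl _ (by simpa using a.isLt)]; simp [ha]
    · rw [hgl _ (by simpa using b.isLt)]; simp [hb]
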